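/- Let z ∈ ℂ, z ≠ 0, and suppose (β,α) ∈ H^z ∩ H1^z with β, α ≠ 0. Then the function y ↦ [(β,α), y] is Y-z-harmonic on all of ℤ × ℤ≥0, i.e., z·(P[(β,α),·])(y) = [(β,α), y] for every y ∈ ℤ × ℤ≥0. -/

import Mathlib

noncomputable section

/-- One step of the walk constrained only on the second coordinate:
`π₁(y,v) = v` if `y + v ∈ ℤ × ℤ≥0`, and `0` otherwise. -/
def stepY (p v : ℤ × ℤ) : ℤ × ℤ := if 0 ≤ (p + v).2 then p + v else p

/-- The one-step operator `P` of the walk `Y`. -/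
def Pop (l1 m1 l2 m2 : ℝ) (h : ℤ × ℤ → ℂ) (y : ℤ × ℤ) : ℂ :=
  (l1 : ℂ) * h (stepY y (-1, 0)) + (m1 : ℂ) * h (stepY y (1, 0)) +
    (l2 : ℂ) * h (stepY y (0, 1)) + (m2 : ℂ) * h (stepY y (0, -1))

/-- `[(β,α), y] = β^(y(1)-y(2)) · α^(y(2))`. -/
def brkt (β α : ℂ) (y : ℤ × ℤ) : ℂ := β ^ (y.1 - y.2) * α ^ y.2

/-- The interior characteristic polynomial of `Y`. -/
def pchar (l1 m1 l2 m2 : ℝ) (β α : ℂ) : ℂ :=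
  (l1 : ℂ) / β + (m1 : ℂ) * β + (l2 : ℂ) * α / β + (m2 : ℂ) * β / α

/-- The characteristic polynomial of `Y` on the boundary `∂₁`. -/
def p1char (l1 m1 l2 m2 : ℝ) (β α : ℂ) : ℂ :=
  (l1 : ℂ) / β + (m1 : ℂ) * β + (l2 : ℂ) * α / β + (m2 : ℂ)

lemma brkt_self (β : ℂ) (hβ : β ≠ 0) (p : ℤ × ℤ) : brkt β β p = β ^ p.1 := by
  unfold brkt
  rw [← zpow_add₀ hβ, sub_add_cancel]

theorem stmt4 (l1 m1 l2 m2 : ℝ)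
    (hl1 : 0 < l1) (hm1 : 0 < m1) (hl2 : 0 < l2) (hm2 : 0 < m2)
    (hsum : l1 + l2 + m1 + m2 = 1)
    (hρ1 : l1 / m1 < 1) (hρ2 : l2 / m2 < 1)
    (hord1 : l2 / m2 ≤ (l1 + l2) / (m1 + m2))
    (hord2 : (l1 + l2) / (m1 + m2) ≤ l1 / m1)
    (z : ℂ) (hz : z ≠ 0)
    (β α : ℂ) (hβ : β ≠ 0) (hα : α ≠ 0)
    (hH : z * pchar l1 m1 l2 m2 β α = 1)
    (hH1 : z * p1char l1 m1 l2 m2 β α = 1) :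
    ∀ y : ℤ × ℤ, 0 ≤ y.2 →
      z * Pop l1 m1 l2 m2 (brkt β α) y = brkt β α y := by
  have hm2' : (m2 : ℂ) ≠ 0 := by exact_mod_cast hm2.ne'
  have hpe : pchar l1 m1 l2 m2 β α = p1char l1 m1 l2 m2 β α :=
    mul_left_cancel₀ hz (hH.trans hH1.symm)
  have hba : β = α := by
    unfold pchar p1char at hpe
    have h1 : (m2 : ℂ) * β / α = m2 := by linear_combination hpe
    field_simp at h1
    exact h1
  subst hba
  have key : z * ((l1 : ℂ) / β + m1 * β + l2 + m2) = 1 := by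
    unfold p1char at hH1
    rw [mul_div_assoc, div_self hβ, mul_one] at hH1
    exact hH1
  intro y hy
  have s1 : stepY y (0, 1) = (y.1, y.2 + 1) := by
    have h : (0:ℤ) ≤ y.2 + 1 := by omega
    simp [stepY, Prod.ext_iff, Prod.fst_add, Prod.snd_add, h]
  have s2 : (stepY y (0, -1)).1 = y.1 := by
    unfold stepY; split <;> simp
  have s3 : stepY y (1, 0) = (y.1 + 1, y.2) := by
    simp [stepY, Prod.ext_iff, Prod.fst_add, Prod.snd_add, hy]
  have s4 : stepY y (-1, 0) = (y.1 - 1, y.2) := by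
    simp [stepY, Prod.ext_iff, Prod.fst_add, Prod.snd_add, hy, sub_eq_add_neg]
  have hb : ∀ p : ℤ × ℤ, brkt β β p = β ^ p.1 := brkt_self β hβ
  unfold Pop
  rw [s1, s3, s4]
  simp only [hb, s2]
  rw [zpow_sub_one₀ hβ, zpow_add_one₀ hβ]
  field_simp at key ⊢
  linear_combination key
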